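/- In a maximally-branching rooted join tree, for every non-root node v_p and every child v_c of v_p, the nodes v_c and v_p share a vertex that does not appear in any strict ancestor of v_p. -/
import Mathlib

/-- The underlying tree graph of a parent function: `i` and `j` are adjacent
iff one is the parent of the other. -/
def treeGraph {ι : Type*} (parent : ι → ι) : SimpleGraph ι :=
  SimpleGraph.fromRel (fun i j => parent i = j)

/-- Join-tree property: for every vertex `u` of the hypergraph, the set of
tree nodes whose hyperedge contains `u` is connected in the tree. -/
def joinTreeProp {V ι : Type*} (N : ι → Set V) (parent : ι → ι) : Prop :=
  ∀ u : V, ((treeGraph parent).induce {i | u ∈ N i}).Preconnected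

/-- `a` is a strict ancestor of `p`: some positive iterate of `parent` maps `p` to `a`. -/
def strictAncestor {ι : Type*} (parent : ι → ι) (p a : ι) : Prop :=
  ∃ n, 1 ≤ n ∧ parent^[n] p = a

/-- Maximally branching: no node `c` can be disconnected from its parent and
reconnected to a strict ancestor of its parent while keeping the join-tree property. -/
def maxBranching {V ι : Type*} [DecidableEq ι] (N : ι → Set V) (r : ι)
    (parent : ι → ι) : Prop :=
  ∀ c a, c ≠ r → strictAncestor parent (parent c) a → a ≠ parent c →
    ¬ joinTreeProp N (Function.update parent c a)

/-- A node on a cycle that reaches the root must be the root. -/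
lemma cycle_eq_root {ι : Type*} (parent : ι → ι) (r : ι) (hr : parent r = r)
    (p : ι) (hreach : ∃ k, parent^[k] p = r)
    (m : ℕ) (hm : 1 ≤ m) (hcyc : parent^[m] p = p) : p = r := by
  obtain ⟨k, hk⟩ := hreach
  have hmul : ∀ t : ℕ, parent^[t * m] p = p := by
    intro t
    induction t with
    | zero => simp
    | succ t ih =>
      have h1 : (t + 1) * m = m + t * m := by ring
      rw [h1, Function.iterate_add_apply, ih, hcyc]
  have hkm : k ≤ k * m := Nat.le_mul_of_pos_right k hm
  calc p = parent^[k * m] p := (hmul k).symm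
    _ = parent^[k * m - k] (parent^[k] p) := by
        rw [← Function.iterate_add_apply]
        congr 1
        omega
    _ = r := by rw [hk]; exact Function.iterate_fixed hr _

/-- If a walk in the induced subgraph goes from a descendant of `p` to a
non-descendant of `p`, then `parent p` belongs to the set. -/
lemma walk_cross {V ι : Type*} (N : ι → Set V) (parent : ι → ι) (p : ι) (u : V)
    {x y : ↥{i | u ∈ N i}} (w : ((treeGraph parent).induce {i | u ∈ N i}).Walk x y) :
    (∃ n, parent^[n] (x : ι) = p) → (¬ ∃ n, parent^[n] (y : ι) = p) →
    u ∈ N (parent p) := by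
  induction w with
  | nil => intro hx hy; exact absurd hx hy
  | @cons a b z hab w ih =>
    intro hx hy
    by_cases hb : ∃ n, parent^[n] (b : ι) = p
    · exact ih hb hy
    · have hadj : (treeGraph parent).Adj (a : ι) (b : ι) := hab
      rw [treeGraph, SimpleGraph.fromRel_adj] at hadj
      obtain ⟨hne, hpa | hpb⟩ := hadj
      · obtain ⟨n, hn⟩ := hx
        cases n with
        | zero =>
          simp only [Function.iterate_zero, id_eq] at hn
          have hbq : (b : ι) = parent p := by rw [← hn, hpa]
          rw [← hbq]
          exact b.2
        | succ n =>
          exact absurd ⟨n, by rw [← hpa, ← Function.iterate_succ_apply]; exact hn⟩ hb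
      · obtain ⟨n, hn⟩ := hx
        exact absurd ⟨n + 1, by rw [Function.iterate_succ_apply, hpb]; exact hn⟩ hb

/-- In a maximally-branching rooted join tree, every non-root node `p`
and child `c` of `p` share a vertex not appearing in any strict ancestor of `p`. -/
theorem maxBranching_parent_child_shared_vertex {V ι : Type*} [Fintype ι] [DecidableEq ι]
    (N : ι → Set V) (r : ι) (parent : ι → ι)
    (hroot : parent r = r) (hreach : ∀ i, ∃ n, parent^[n] i = r)
    (hjt : joinTreeProp N parent) (hmb : maxBranching N r parent)
    (p c : ι) (hp : p ≠ r) (hc : parent c = p) (hcr : c ≠ r) :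
    ∃ u : V, u ∈ N c ∧ u ∈ N p ∧ ∀ a, strictAncestor parent p a → u ∉ N a := by
  by_contra hcon
  push_neg at hcon
  -- hcon : ∀ u, u ∈ N c → u ∈ N p → ∃ a, strictAncestor parent p a ∧ u ∈ N a
  have hqp : parent p ≠ p := by
    intro h
    exact hp (cycle_eq_root parent r hroot p (hreach p) 1 le_rfl (by simpa using h))
  have hcp : c ≠ p := by
    intro h
    subst h
    exact hcr (cycle_eq_root parent r hroot c (hreach c) 1 le_rfl (by simpa using hc))
  have hqc : parent p ≠ c := by
    intro h
    apply hp
    refine cycle_eq_root parent r hroot p (hreach p) 2 (by norm_num) ?_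
    have : parent^[2] p = parent (parent p) := by
      rw [show (2 : ℕ) = 1 + 1 from rfl, Function.iterate_add_apply, Function.iterate_one]
    rw [this, h, hc]
  have hsa : strictAncestor parent (parent c) (parent p) :=
    ⟨1, le_rfl, by rw [Function.iterate_one, hc]⟩
  have hnjt := hmb c (parent p) hcr hsa (by rw [hc]; exact hqp)
  apply hnjt
  intro u X Y
  -- Edge lemma for the new graph
  have key : ∀ (a b : ↥{i | u ∈ N i}), parent (a : ι) = (b : ι) → (a : ι) ≠ (b : ι) →
      ((treeGraph (Function.update parent c (parent p))).induce {i | u ∈ N i}).Reachable a b := by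
    intro a b hab hne
    by_cases hac : (a : ι) = c
    · have hbp : (b : ι) = p := by rw [← hab, hac, hc]
      have huc : u ∈ N c := hac ▸ a.2
      have hup : u ∈ N p := hbp ▸ b.2
      obtain ⟨a', hsa', hua'⟩ := hcon u huc hup
      obtain ⟨n, hn1, hn⟩ := hsa'
      have hnd : ¬ ∃ m, parent^[m] a' = p := by
        rintro ⟨m, hm⟩
        apply hp
        refine cycle_eq_root parent r hroot p (hreach p) (m + n) (by omega) ?_
        rw [Function.iterate_add_apply, hn, hm]
      have huq : u ∈ N (parent p) := by
        obtain ⟨w'⟩ := hjt u ⟨p, hup⟩ ⟨a', hua'⟩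
        exact walk_cross N parent p u w' ⟨0, rfl⟩ hnd
      have adj1 : (treeGraph (Function.update parent c (parent p))).Adj c (parent p) := by
        rw [treeGraph, SimpleGraph.fromRel_adj]
        exact ⟨fun h => hqc h.symm, Or.inl (by simp)⟩
      have adj2 : (treeGraph (Function.update parent c (parent p))).Adj p (parent p) := by
        rw [treeGraph, SimpleGraph.fromRel_adj]
        refine ⟨fun h => hqp h.symm, Or.inl ?_⟩
        rw [Function.update_of_ne (Ne.symm hcp)]
      have r1 : ((treeGraph (Function.update parent c (parent p))).induce {i | u ∈ N i}).Adj
          a ⟨parent p, huq⟩ := by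
        show (treeGraph (Function.update parent c (parent p))).Adj (a : ι) (parent p)
        rw [hac]; exact adj1
      have r2 : ((treeGraph (Function.update parent c (parent p))).induce {i | u ∈ N i}).Adj
          b ⟨parent p, huq⟩ := by
        show (treeGraph (Function.update parent c (parent p))).Adj (b : ι) (parent p)
        rw [hbp]; exact adj2
      exact r1.reachable.trans r2.reachable.symm
    · have hadj : (treeGraph (Function.update parent c (parent p))).Adj (a : ι) (b : ι) := by
        rw [treeGraph, SimpleGraph.fromRel_adj]
        exact ⟨hne, Or.inl (by rw [Function.update_of_ne hac, hab])⟩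
      exact SimpleGraph.Adj.reachable hadj
  have hedge : ∀ (a b : ↥{i | u ∈ N i}), (treeGraph parent).Adj (a : ι) (b : ι) →
      ((treeGraph (Function.update parent c (parent p))).induce {i | u ∈ N i}).Reachable a b := by
    intro a b h
    rw [treeGraph, SimpleGraph.fromRel_adj] at h
    obtain ⟨hne, h1 | h2⟩ := h
    · exact key a b h1 hne
    · exact (key b a h2 (Ne.symm hne)).symm
  obtain ⟨w⟩ := hjt u X Y
  clear hnjt
  induction w with
  | nil => exact SimpleGraph.Reachable.refl _
  | @cons a b z hab w ih => exact (hedge a b hab).trans ih
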